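/- Let p₁,…,pₙ ∈ ℂ and s ∈ ℂ be fixed, and suppose h ∈ ℂ is nonzero with Re(h·(s + k·pᵢ)) > 0 for all i and all k ∈ (0,1]. Then -s is not an eigenvalue of Q* P Q X for any Q ∈ ℂ^{n×m} with Q*Q = I, P = diag(p₁,…,pₙ), and X Hermitian positive definite with eigenvalues in (0,1]. -/

import Mathlib

open Matrix
open scoped ComplexOrder

/-- If a Hermitian matrix has eigenvalues in `(0,1]`, then `X - X*X` is PSD. -/
lemma aux_sub_sq_posSemidef {m : ℕ} (X : Matrix (Fin m) (Fin m) ℂ)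
    (hX : X.IsHermitian) (hev : ∀ i, hX.eigenvalues i ∈ Set.Ioc (0 : ℝ) 1) :
    (X - X * X).PosSemidef := by
  classical
  set U : Matrix (Fin m) (Fin m) ℂ := (hX.eigenvectorUnitary : Matrix (Fin m) (Fin m) ℂ)
    with hU
  set D : Matrix (Fin m) (Fin m) ℂ := Matrix.diagonal (RCLike.ofReal ∘ hX.eigenvalues) with hD
  have hst : star U * U = 1 := Matrix.mem_unitaryGroup_iff'.mp hX.eigenvectorUnitary.2
  have hspec : X = U * D * star U := hX.spectral_theorem
  have key : X - X * X = U * (D - D * D) * star U := by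
    rw [hspec]
    rw [Matrix.mul_sub, Matrix.sub_mul]
    congr 1
    rw [show U * D * star U * (U * D * star U) = U * D * (star U * U) * (D * star U) by
      noncomm_ring]
    rw [hst, mul_one]
    noncomm_ring
  have hDform : D - D * D = Matrix.diagonal
      (fun i => ((hX.eigenvalues i - hX.eigenvalues i * hX.eigenvalues i : ℝ) : ℂ)) := by
    rw [hD, Matrix.diagonal_mul_diagonal]
    ext i j
    by_cases hij : i = j
    · subst hij
      simp [Matrix.diagonal_apply_eq, Function.comp, Matrix.sub_apply]
    · simp [Matrix.diagonal_apply_ne _ hij, Matrix.sub_apply]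
  have hDD : (D - D * D).PosSemidef := by
    rw [hDform]
    refine Matrix.posSemidef_diagonal_iff.mpr fun i => ?_
    have h1 := (hev i).1
    have h2 := (hev i).2
    have h3 : (0 : ℝ) ≤ hX.eigenvalues i - hX.eigenvalues i * hX.eigenvalues i := by nlinarith
    exact (Complex.zero_le_real
      (x := hX.eigenvalues i - hX.eigenvalues i * hX.eigenvalues i)).2 h3
  rw [key]
  simpa [Matrix.star_eq_conjTranspose] using hDD.mul_mul_conjTranspose_same U

/-- if a nonzero direction `h` satisfies the strict separation
condition `Re (h·(s + k·pᵢ)) > 0` for all `i` and all `k ∈ (0,1]`, then `-s`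
is not an eigenvalue of `Qᴴ P Q X` for any `Q` with orthonormal columns and
any Hermitian positive definite `X` with eigenvalues in `(0,1]`. -/
theorem neg_s_not_eigenvalue (n : ℕ) (p : Fin n → ℂ) (s : ℂ) (h : ℂ)
    (hh : h ≠ 0)
    (hsep : ∀ i, ∀ k : ℝ, k ∈ Set.Ioc (0 : ℝ) 1 →
      0 < (h * (s + (k : ℂ) * p i)).re) :
    ∀ (m : ℕ) (Q : Matrix (Fin n) (Fin m) ℂ), Qᴴ * Q = 1 →
      ∀ (X : Matrix (Fin m) (Fin m) ℂ) (hX : X.PosDef),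
        (∀ i, hX.1.eigenvalues i ∈ Set.Ioc (0 : ℝ) 1) →
        -s ∉ spectrum ℂ (Qᴴ * Matrix.diagonal p * Q * X) := by
  intro m Q hQ X hX hXev hmem
  classical
  set M := Qᴴ * Matrix.diagonal p * Q * X with hM
  rw [spectrum.mem_iff] at hmem
  have hdet : (algebraMap ℂ (Matrix (Fin m) (Fin m) ℂ) (-s) - M).det = 0 := by
    by_contra hd
    exact hmem ((Matrix.isUnit_iff_isUnit_det _).2 (isUnit_iff_ne_zero.2 hd))
  obtain ⟨v, hv0, hveq⟩ := Matrix.exists_mulVec_eq_zero_iff.mpr hdet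
  have hMv : M *ᵥ v = (-s) • v := by
    rw [sub_mulVec] at hveq
    have h1 : (algebraMap ℂ (Matrix (Fin m) (Fin m) ℂ) (-s)) *ᵥ v = (-s) • v := by
      rw [Algebra.algebraMap_eq_smul_one, Matrix.smul_mulVec, Matrix.one_mulVec]
    rw [h1] at hveq
    exact (sub_eq_zero.mp hveq).symm
  have hXh : Xᴴ = X := hX.1
  set y : Fin m → ℂ := X *ᵥ v with hy
  set u : Fin n → ℂ := Q *ᵥ y with hu
  set a : ℂ := dotProduct (star v) y with ha
  have ha_pos : 0 < a := by rw [ha, hy]; exact hX.dotProduct_mulVec_pos hv0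
  have hare : 0 < a.re ∧ a.im = 0 := by
    rw [Complex.lt_def] at ha_pos
    exact ⟨ha_pos.1, ha_pos.2.symm⟩
  have hareal : a = ((a.re : ℝ) : ℂ) := Complex.ext (by simp) (by simp [hare.2])
  -- star y ⬝ᵥ v = a
  have hyv : dotProduct (star y) v = a := by
    rw [ha, hy, star_mulVec, ← Matrix.dotProduct_mulVec, hXh]
  -- eigen equation for the product without X
  have hQPQy : (Qᴴ * Matrix.diagonal p * Q) *ᵥ y = (-s) • v := by
    rw [hy, Matrix.mulVec_mulVec]
    exact hMv
  -- quadratic form identity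
  have quad : dotProduct (star y) ((Qᴴ * Matrix.diagonal p * Q) *ᵥ y)
      = ∑ i, (Complex.normSq (u i) : ℂ) * p i := by
    rw [← Matrix.mulVec_mulVec, ← Matrix.mulVec_mulVec (M := Qᴴ),
      Matrix.dotProduct_mulVec (star y) Qᴴ, ← star_mulVec, ← hu]
    simp only [dotProduct, Pi.star_apply, Matrix.mulVec_diagonal]
    refine Finset.sum_congr rfl fun i _ => ?_
    rw [Complex.normSq_eq_conj_mul_self]
    simp only [Complex.star_def]
    ring
  -- the main complex identity
  have main : ∑ i, (Complex.normSq (u i) : ℂ) * p i = -s * a := by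
    rw [← quad, hQPQy, dotProduct_smul, hyv, smul_eq_mul]
  -- norms
  set L : ℝ := ∑ i, Complex.normSq (u i) with hL
  have huL : dotProduct (star u) u = (L : ℂ) := by
    rw [hL]
    push_cast
    simp only [dotProduct, Pi.star_apply]
    exact Finset.sum_congr rfl fun i _ => (Complex.normSq_eq_conj_mul_self).symm
  have hLb : dotProduct (star u) u = dotProduct (star y) y := by
    rw [hu, star_mulVec, ← Matrix.dotProduct_mulVec, Matrix.mulVec_mulVec, hQ,
      Matrix.one_mulVec]
  have hyy : dotProduct (star y) y = dotProduct (star v) ((X * X) *ᵥ v) := by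
    rw [hy, star_mulVec, ← Matrix.dotProduct_mulVec, Matrix.mulVec_mulVec, hXh]
  -- L is positive
  have hy0 : y ≠ 0 := by
    intro h0
    rw [ha, h0, dotProduct_zero] at ha_pos
    exact lt_irrefl _ ha_pos
  have hyL : dotProduct (star y) y = ((∑ i, Complex.normSq (y i) : ℝ) : ℂ) := by
    push_cast
    simp only [dotProduct, Pi.star_apply]
    exact Finset.sum_congr rfl fun i _ => (Complex.normSq_eq_conj_mul_self).symm
  have hLeq : L = ∑ i, Complex.normSq (y i) := by
    have : ((L : ℝ) : ℂ) = ((∑ i, Complex.normSq (y i) : ℝ) : ℂ) := by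
      rw [← huL, hLb, hyL]
    exact_mod_cast this
  have hLpos : 0 < L := by
    rw [hLeq]
    obtain ⟨j, hj⟩ := Function.ne_iff.mp hy0
    exact Finset.sum_pos' (fun i _ => Complex.normSq_nonneg _)
      ⟨j, Finset.mem_univ _, Complex.normSq_pos.mpr hj⟩
  -- L ≤ a.re using PSD of X - X²
  have hps := (aux_sub_sq_posSemidef X hX.1 hXev).re_dotProduct_nonneg v
  have hLa : L ≤ a.re := by
    rw [Matrix.sub_mulVec, dotProduct_sub] at hps
    have h1 : dotProduct (star v) (X *ᵥ v) = a := by rw [ha, hy]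
    have h2 : dotProduct (star v) ((X * X) *ᵥ v) = (L : ℂ) := by
      rw [← hyy, ← hLb, huL]
    rw [h1, h2] at hps
    simpa using hps
  -- define t
  set t : ℝ := L / a.re with ht
  have htmem : t ∈ Set.Ioc (0 : ℝ) 1 :=
    ⟨div_pos hLpos hare.1, (div_le_one hare.1).mpr hLa⟩
  have hteq : (t : ℂ) * ((a.re : ℝ) : ℂ) = (L : ℂ) := by
    have hA0 : ((a.re : ℝ) : ℂ) ≠ 0 := Complex.ofReal_ne_zero.mpr (ne_of_gt hare.1)
    rw [ht]
    push_cast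
    exact div_mul_cancel₀ _ hA0
  have hsumL : ∑ i, (Complex.normSq (u i) : ℂ) = (L : ℂ) := by
    rw [hL]; push_cast; rfl
  have hzero : ∑ i, (Complex.normSq (u i) : ℂ) * (h * (s + (t : ℂ) * p i)) = 0 := by
    have expand : ∑ i, (Complex.normSq (u i) : ℂ) * (h * (s + (t : ℂ) * p i))
        = h * s * (∑ i, (Complex.normSq (u i) : ℂ))
          + h * (t : ℂ) * (∑ i, (Complex.normSq (u i) : ℂ) * p i) := by
      rw [Finset.mul_sum, Finset.mul_sum, ← Finset.sum_add_distrib]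
      exact Finset.sum_congr rfl fun i _ => by ring
    rw [expand, hsumL, main, hareal]
    linear_combination (-(h * s)) * hteq
  have hre : ∑ i, Complex.normSq (u i) * (h * (s + (t : ℂ) * p i)).re = 0 := by
    have h0 := congrArg Complex.re hzero
    rw [Complex.re_sum, Complex.zero_re] at h0
    rw [← h0]
    exact Finset.sum_congr rfl fun i _ => (Complex.re_ofReal_mul _ _).symm
  obtain ⟨i0, hi0⟩ : ∃ i, 0 < Complex.normSq (u i) := by
    by_contra hc
    push_neg at hc
    have : L ≤ 0 := Finset.sum_nonpos fun i _ => hc i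
    linarith
  have hpos : 0 < ∑ i, Complex.normSq (u i) * (h * (s + (t : ℂ) * p i)).re :=
    Finset.sum_pos'
      (fun i _ => mul_nonneg (Complex.normSq_nonneg _) (le_of_lt (hsep i t htmem)))
      ⟨i0, Finset.mem_univ _, mul_pos hi0 (hsep i0 t htmem)⟩
  linarith
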